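/- Let E be an exact category admitting both a right abelian envelope (A_r(E), i_R) and a left abelian envelope (A_l(E), i_L). Then there exist a right exact functor F : A_r(E) → A_l(E) with F ∘ i_R naturally isomorphic to i_L and a left exact functor G : A_l(E) → A_r(E) with G ∘ i_L naturally isomorphic to i_R, and F is left adjoint to G. -/

import Mathlib

open CategoryTheory Limits Opposite

universe u

namespace Env

section Basics

variable {C : Type*} [Category C]

/-- `g` is a weak kernel of `f`. -/
def IsWeakKernel [Limits.HasZeroMorphisms C] {A B K : C} (f : B ⟶ A) (g : K ⟶ B) : Prop :=
  g ≫ f = 0 ∧ ∀ ⦃K' : C⦄ (g' : K' ⟶ B), g' ≫ f = 0 → ∃ t : K' ⟶ K, t ≫ g = g'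

/-- `h` is a weak cokernel of `f`. -/
def IsWeakCokernel [Limits.HasZeroMorphisms C] {A B Q : C} (f : A ⟶ B) (h : B ⟶ Q) : Prop :=
  f ≫ h = 0 ∧ ∀ ⦃Q' : C⦄ (h' : B ⟶ Q'), f ≫ h' = 0 → ∃ t : Q ⟶ Q', h ≫ t = h'

/-- A kernel–cokernel pair: `f ≫ g = 0`, `f` is a kernel of `g` and `g` is a cokernel of `f`. -/
structure IsKernelCokernelPair [Limits.HasZeroMorphisms C] {A B X : C}
    (f : A ⟶ B) (g : B ⟶ X) : Prop where
  zero : f ≫ g = 0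
  isKernel : Nonempty (IsLimit (KernelFork.ofι f zero))
  isCokernel : Nonempty (IsColimit (CokernelCofork.ofπ g zero))

end Basics

lemma map_comp_zero {C : Type*} [Category C] [Preadditive C]
    {D : Type*} [Category D] [Preadditive D]
    (F : C ⥤ D) (hF : F.Additive) {X Y Z : C} {f : X ⟶ Y} {g : Y ⟶ Z}
    (wzero : f ≫ g = 0) : F.map f ≫ F.map g = 0 := by
  haveI := hF
  rw [← F.map_comp, wzero, Functor.map_zero]

/-- A Quillen exact structure on an additive category: a distinguished class of conflations
(kernel–cokernel pairs) satisfying Quillen's axioms. -/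
structure ExactStructure (E : Type*) [Category E] [Preadditive E] where
  /-- `conf f g` means that `(f, g)` is a conflation. -/
  conf : ∀ ⦃A B C : E⦄, (A ⟶ B) → (B ⟶ C) → Prop
  conf_pair : ∀ ⦃A B C : E⦄ (f : A ⟶ B) (g : B ⟶ C), conf f g → IsKernelCokernelPair f g
  defl_id : ∀ X : E, ∃ (A : E) (f : A ⟶ X), conf f (𝟙 X)
  defl_comp : ∀ ⦃A B C : E⦄ (g : A ⟶ B) (g' : B ⟶ C),
    (∃ (K : E) (f : K ⟶ A), conf f g) → (∃ (K : E) (f : K ⟶ B), conf f g') →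
    ∃ (K : E) (f : K ⟶ A), conf f (g ≫ g')
  defl_pullback : ∀ ⦃B C C' : E⦄ (g : B ⟶ C) (h : C' ⟶ C),
    (∃ (K : E) (f : K ⟶ B), conf f g) →
    ∃ (B' : E) (p : B' ⟶ B) (q : B' ⟶ C') (w : p ≫ g = q ≫ h),
      (∃ (K : E) (f : K ⟶ B'), conf f q) ∧ Nonempty (IsLimit (PullbackCone.mk p q w))
  infl_pushout : ∀ ⦃A B A' : E⦄ (f : A ⟶ B) (h : A ⟶ A'),
    (∃ (C : E) (g : B ⟶ C), conf f g) →
    ∃ (B' : E) (p : B ⟶ B') (q : A' ⟶ B') (w : f ≫ p = h ≫ q),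
      (∃ (C : E) (g : B' ⟶ C), conf q g) ∧ Nonempty (IsColimit (PushoutCocone.mk p q w))

section Exact

variable {E : Type*} [Category E] [Preadditive E]

/-- `g` is a deflation for the exact structure `S`. -/
def ExactStructure.IsDeflation (S : ExactStructure E) {B C : E} (g : B ⟶ C) : Prop :=
  ∃ (K : E) (f : K ⟶ B), S.conf f g

/-- `f` is an inflation for the exact structure `S`. -/
def ExactStructure.IsInflation (S : ExactStructure E) {A B : E} (f : A ⟶ B) : Prop :=
  ∃ (C : E) (g : B ⟶ C), S.conf f g

/-- A functor from an exact category to an additive category is right exact if it is additive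
and for every conflation `(f, g)`, `F g` is a cokernel of `F f`. -/
structure IsRightExact (S : ExactStructure E) {B : Type*} [Category B] [Preadditive B]
    (F : E ⥤ B) : Prop where
  additive : F.Additive
  preserves : ∀ ⦃A X C : E⦄ (f : A ⟶ X) (g : X ⟶ C) (h : S.conf f g),
    Nonempty (IsColimit (CokernelCofork.ofπ (F.map g)
      (map_comp_zero F additive (S.conf_pair f g h).zero)))

/-- A functor from an exact category to an additive category is left exact if it is additive
and for every conflation `(f, g)`, `F f` is a kernel of `F g`. -/
structure IsLeftExact (S : ExactStructure E) {B : Type*} [Category B] [Preadditive B]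
    (F : E ⥤ B) : Prop where
  additive : F.Additive
  preserves : ∀ ⦃A X C : E⦄ (f : A ⟶ X) (g : X ⟶ C) (h : S.conf f g),
    Nonempty (IsLimit (KernelFork.ofι (F.map f)
      (map_comp_zero F additive (S.conf_pair f g h).zero)))

/-- `g : C ⟶ B` is an Ext-kernel of `f : B ⟶ A` (w.r.t. the exact structure `S`):
`g ≫ f = 0` and for every `g' : C' ⟶ B` with `g' ≫ f = 0` there is a deflation
`d : D ⟶ C'` such that `d ≫ g'` factors through `g`. -/
def IsExtKernel (S : ExactStructure E) {A B C : E} (f : B ⟶ A) (g : C ⟶ B) : Prop :=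
  g ≫ f = 0 ∧ ∀ ⦃C' : E⦄ (g' : C' ⟶ B), g' ≫ f = 0 →
    ∃ (D : E) (d : D ⟶ C'), S.IsDeflation d ∧ ∃ t : D ⟶ C, t ≫ g = d ≫ g'

/-- An exact category is left Ext-coherent if every morphism admits an Ext-kernel. -/
def LeftExtCoherent (S : ExactStructure E) : Prop :=
  ∀ ⦃B A : E⦄ (f : B ⟶ A), ∃ (C : E) (g : C ⟶ B), IsExtKernel S f g

end Exact

/-- An additive category is left coherent if every morphism admits a weak kernel. -/
def LeftCoherent (E : Type*) [Category E] [Preadditive E] : Prop :=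
  ∀ ⦃B A : E⦄ (f : B ⟶ A), ∃ (K : E) (g : K ⟶ B), IsWeakKernel f g

section MoreDefs

variable (C : Type*) [Category C] [Preadditive C]

/-- An additive functor between additive categories preserving cokernels: every morphism
which is a cokernel (of some morphism) is sent to a cokernel of its image. -/
structure PreservesCokernelsP {C : Type*} [Category C] [Preadditive C]
    {D : Type*} [Category D] [Preadditive D] (F : C ⥤ D) : Prop where
  additive : F.Additive
  preserves : ∀ ⦃X Y Z : C⦄ (f : X ⟶ Y) (c : Y ⟶ Z) (w : f ≫ c = 0),
    Nonempty (IsColimit (CokernelCofork.ofπ c w)) →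
    Nonempty (IsColimit (CokernelCofork.ofπ (F.map c) (map_comp_zero F additive w)))

/-- An additive category is left abelian if it has cokernels and for every morphism
`f : A ⟶ B` with cokernel `c : B ⟶ X` and every `g : D ⟶ B` with `g ≫ c = 0` there is
a morphism `d : E ⟶ D` which is a cokernel (of some morphism), such that `d ≫ g` factors
through `f`. -/
structure IsLeftAbelian : Prop where
  hasCokernels : HasCokernels C
  factor : ∀ ⦃A B X : C⦄ (f : A ⟶ B) (c : B ⟶ X) (w : f ≫ c = 0),
    Nonempty (IsColimit (CokernelCofork.ofπ c w)) →
    ∀ ⦃D : C⦄ (g : D ⟶ B), g ≫ c = 0 →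
      ∃ (W E : C) (u : W ⟶ E) (d : E ⟶ D) (w' : u ≫ d = 0),
        Nonempty (IsColimit (CokernelCofork.ofπ d w')) ∧ ∃ t : E ⟶ A, t ≫ f = d ≫ g

/-- A preadditive category (with its given preadditive structure) is abelian:
it has finite biproducts, kernels and cokernels, and every monomorphism and every
epimorphism is normal. -/
def IsAbelianP : Prop :=
  HasFiniteBiproducts C ∧ HasKernels C ∧ HasCokernels C ∧
    (∀ ⦃X Y : C⦄ (f : X ⟶ Y), Mono f → Nonempty (NormalMono f)) ∧
    (∀ ⦃X Y : C⦄ (f : X ⟶ Y), Epi f → Nonempty (NormalEpi f))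

end MoreDefs

/-- An object `X` is compact (finitely presented) if `Hom(X, -)` preserves filtered colimits
(indexed by small filtered categories in `Type u`). -/
def IsCompact {C : Type*} [Category C] (X : C) : Prop :=
  ∀ (J : Type u) (_ : SmallCategory J), IsFiltered J →
    Nonempty (PreservesColimitsOfShape J (coyoneda.obj (op X)))

section RexAbelian

variable {A : Type*} [Category A] [Abelian A] {B : Type*} [Category B] [Preadditive B]

/-- A functor from an abelian category (whose conflations are all kernel–cokernel pairs,
i.e. all short exact sequences) is right exact if it is additive and sends every short exact
sequence `(f, g)` to a diagram where `F g` is a cokernel of `F f`. -/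
structure IsRightExactAb (F : A ⥤ B) : Prop where
  additive : F.Additive
  preserves : ∀ ⦃X Y Z : A⦄ (f : X ⟶ Y) (g : Y ⟶ Z) (h : IsKernelCokernelPair f g),
    Nonempty (IsColimit (CokernelCofork.ofπ (F.map g) (map_comp_zero F additive h.zero)))

/-- A functor from an abelian category (whose conflations are all kernel–cokernel pairs,
i.e. all short exact sequences) is left exact if it is additive and sends every short exact
sequence `(f, g)` to a diagram where `F f` is a kernel of `F g`. -/
structure IsLeftExactAb (F : A ⥤ B) : Prop where
  additive : F.Additive
  preserves : ∀ ⦃X Y Z : A⦄ (f : X ⟶ Y) (g : Y ⟶ Z) (h : IsKernelCokernelPair f g),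
    Nonempty (IsLimit (KernelFork.ofι (F.map f) (map_comp_zero F additive h.zero)))

end RexAbelian

section Envelope

/-- `(A, i)` is a right abelian envelope of the exact category `(E, S)`: `i` is right exact
and for every abelian category `B`, precomposition with `i` induces an equivalence from the
category of right exact functors `A ⥤ B` to the category of right exact functors `E ⥤ B`.

The equivalence given by precomposition is expressed by: precomposition with `i` sends right
exact functors to right exact functors, it is fully faithful (whiskering is a bijection on
natural transformations) and essentially surjective (every right exact `E ⥤ B` is isomorphic
to some `i ⋙ G` with `G` right exact). -/
structure IsRightAbelianEnvelope.{u₀, w₀, v₁, w₁, v₂, w₂} {E : Type u₀} [Category.{w₀} E]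
    [Preadditive E] (S : ExactStructure E)
    {A : Type v₁} [Category.{w₁} A] [Abelian A] (i : E ⥤ A) : Prop where
  rightExact : IsRightExact S i
  comp_rightExact : ∀ (B : Type v₂) [Category.{w₂} B] [Abelian B] (G : A ⥤ B),
    IsRightExactAb G → IsRightExact S (i ⋙ G)
  whisker_bijective : ∀ (B : Type v₂) [Category.{w₂} B] [Abelian B] (G G' : A ⥤ B),
    IsRightExactAb G → IsRightExactAb G' →
      Function.Bijective (fun σ : G ⟶ G' => Functor.whiskerLeft i σ)
  essSurj : ∀ (B : Type v₂) [Category.{w₂} B] [Abelian B] (F : E ⥤ B),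
    IsRightExact S F → ∃ G : A ⥤ B, IsRightExactAb G ∧ Nonempty (i ⋙ G ≅ F)

/-- `(A, i)` is a left abelian envelope of the exact category `(E, S)`: the dual notion of
`IsRightAbelianEnvelope`, with left exact functors in place of right exact ones. -/
structure IsLeftAbelianEnvelope.{u₀, w₀, v₁, w₁, v₂, w₂} {E : Type u₀} [Category.{w₀} E]
    [Preadditive E] (S : ExactStructure E)
    {A : Type v₁} [Category.{w₁} A] [Abelian A] (i : E ⥤ A) : Prop where
  leftExact : IsLeftExact S i
  comp_leftExact : ∀ (B : Type v₂) [Category.{w₂} B] [Abelian B] (G : A ⥤ B),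
    IsLeftExactAb G → IsLeftExact S (i ⋙ G)
  whisker_bijective : ∀ (B : Type v₂) [Category.{w₂} B] [Abelian B] (G G' : A ⥤ B),
    IsLeftExactAb G → IsLeftExactAb G' →
      Function.Bijective (fun σ : G ⟶ G' => Functor.whiskerLeft i σ)
  essSurj : ∀ (B : Type v₂) [Category.{w₂} B] [Abelian B] (F : E ⥤ B),
    IsLeftExact S F → ∃ G : A ⥤ B, IsLeftExactAb G ∧ Nonempty (i ⋙ G ≅ F)

/-- A witness for the existence of a right abelian envelope of `(E, S)`: an abelian
category (with object type in `Type (u + 1)` and hom types in `Type u`) together with a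
right exact functor from `E` satisfying the universal property of the right abelian
envelope (where the test abelian categories are taken of the same size). -/
structure RightAbelianEnvelopeWitness {E : Type u} [SmallCategory E] [Preadditive E]
    (S : ExactStructure E) where
  A : Type (u + 1)
  [cat : Category.{u} A]
  [ab : Abelian A]
  i : E ⥤ A
  env : IsRightAbelianEnvelope.{u, u, u + 1, u, u + 1, u} S i

/-- Existence of a right abelian envelope of `(E, S)`. -/
def HasRightAbelianEnvelope {E : Type u} [SmallCategory E] [Preadditive E]
    (S : ExactStructure E) : Prop :=
  Nonempty (RightAbelianEnvelopeWitness S)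

end Envelope

section Lex

variable {E : Type u} [SmallCategory E] [Preadditive E]

/-- A functor `Eᵒᵖ ⥤ Ab` is left exact w.r.t. the exact structure `S` if it is additive and
sends every conflation `(f : A ⟶ B, g : B ⟶ C)` to an exact sequence
`0 ⟶ F C ⟶ F B ⟶ F A`: `F g.op` is injective and its image is the kernel of `F f.op`. -/
structure IsLexFunctor (S : ExactStructure E) (F : Eᵒᵖ ⥤ AddCommGrpCat.{u}) : Prop where
  additive : F.Additive
  inj : ∀ ⦃A B C : E⦄ (f : A ⟶ B) (g : B ⟶ C), S.conf f g →
    Function.Injective (F.map g.op)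
  ex : ∀ ⦃A B C : E⦄ (f : A ⟶ B) (g : B ⟶ C), S.conf f g →
    ∀ x : F.obj (op B), F.map f.op x = 0 ↔ ∃ y : F.obj (op C), F.map g.op y = x

/-- The category `Lex(E)` of left exact functors `Eᵒᵖ ⥤ Ab`. -/
abbrev LexCat (S : ExactStructure E) := ObjectProperty.FullSubcategory (IsLexFunctor S)

/-- The full subcategory of compact objects of `Lex(E)`. -/
abbrev LexCompact (S : ExactStructure E) :=
  ObjectProperty.FullSubcategory (fun F : LexCat S => IsCompact.{u} F)

lemma yoneda_isLex (S : ExactStructure E) (X : E) :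
    IsLexFunctor S (preadditiveYoneda.obj X) where
  additive := inferInstance
  inj := by
    intro A B C f g hc
    obtain ⟨w, hker, hcoker⟩ := S.conf_pair f g hc
    intro x y hxy
    exact Cofork.IsColimit.hom_ext hcoker.some hxy
  ex := by
    intro A B C f g hc
    obtain ⟨w, hker, hcoker⟩ := S.conf_pair f g hc
    intro x
    constructor
    · intro hx
      obtain ⟨y, hy⟩ := CokernelCofork.IsColimit.desc' hcoker.some x hx
      exact ⟨y, hy⟩
    · rintro ⟨y, rfl⟩
      change f ≫ g ≫ (show C ⟶ X from y) = 0
      rw [← Category.assoc, w, zero_comp]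

/-- The Yoneda embedding of `E` into `Lex(E)`, sending `X` to `Hom_E(-, X)`. -/
def yonedaLex (S : ExactStructure E) : E ⥤ LexCat S :=
  ObjectProperty.lift _ preadditiveYoneda (yoneda_isLex S)

/-- The Yoneda embedding of `E` into the subcategory of compact objects of `Lex(E)`, given
a proof that all representable functors are compact. -/
def yonedaLexC (S : ExactStructure E) (hc : ∀ X : E, IsCompact.{u} ((yonedaLex S).obj X)) :
    E ⥤ LexCompact S :=
  ObjectProperty.lift _ (yonedaLex S) hc

end Lex

section LFP

variable {C : Type*} [Category C]

/-- `X` is a filtered colimit of compact objects. -/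
def IsFilteredColimitOfCompacts (X : C) : Prop :=
  ∃ (J : Type u) (_ : SmallCategory J) (_ : IsFiltered J) (F : J ⥤ C)
    (_ : ∀ j : J, IsCompact.{u} (F.obj j)),
    Nonempty ((t : Cocone F) ×' (IsColimit t) ×' (t.pt ≅ X))

/-- A category is locally finitely presented if it has (small) filtered colimits, its
compact objects form a skeletally small full subcategory, and every object is a filtered
colimit of compact objects. -/
def IsLocallyFinitelyPresented (C : Type*) [Category C] : Prop :=
  HasFilteredColimitsOfSize.{u, u} C ∧
    EssentiallySmall.{u} (ObjectProperty.FullSubcategory (fun X : C => IsCompact.{u} X)) ∧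
    ∀ X : C, IsFilteredColimitOfCompacts.{u} X

/-- AB5: small filtered colimits are exact, i.e. for every small filtered category `J`
(such that `C` has colimits of shape `J`), the colimit functor `(J ⥤ C) ⥤ C` preserves
finite limits. -/
def AB5P (C : Type*) [Category C] : Prop :=
  ∀ (J : Type u) (_ : SmallCategory J), IsFiltered J →
    ∀ (h : HasColimitsOfShape J C),
      Nonempty (PreservesFiniteLimits (@colim J _ C _ h))

/-- A Grothendieck category: an abelian category (`IsAbelianP` w.r.t. the given preadditive
structure) with a generator and small colimits, in which small filtered colimits are
exact (AB5). -/
def IsGrothendieckP (C : Type*) [Category C] [Preadditive C] : Prop :=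
  IsAbelianP C ∧ HasColimitsOfSize.{u, u} C ∧ (∃ G : C, IsSeparator G) ∧ AB5P.{u} C

end LFP

/-! ### Auxiliary machinery for `statement_18` -/

section Aux18

variable {C : Type*} [Category.{u} C] [Preadditive C]

/-- The covariant hom functor `Hom(X, -)` into `AddCommGrp`. -/
@[simps, reducible]
def coyon (X : C) : C ⥤ AddCommGrpCat.{u} where
  obj Y := AddCommGrpCat.of (X ⟶ Y)
  map f := AddCommGrpCat.ofHom (AddMonoidHom.mk' (fun u => u ≫ f)
    (by intro a b; simp [Preadditive.add_comp]))
  map_id Y := by ext u; simp [AddCommGrpCat.ofHom]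
  map_comp f g := by ext u; simp [AddCommGrpCat.ofHom]

lemma coyon_additive (X : C) : (coyon X).Additive where
  map_add := by
    intro Y Z f g; ext u
    show u ≫ (f + g) = u ≫ f + u ≫ g
    simp [Preadditive.comp_add]

/-- The contravariant hom functor `Hom(-, M)` into `AddCommGrpᵒᵖ`. -/
@[simps, reducible]
def homOp (M : C) : C ⥤ AddCommGrpCat.{u}ᵒᵖ where
  obj X := op (AddCommGrpCat.of (X ⟶ M))
  map f := (AddCommGrpCat.ofHom (AddMonoidHom.mk' (fun u => f ≫ u)
    (by intro a b; simp [Preadditive.comp_add]))).op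
  map_id X := by
    apply Quiver.Hom.unop_inj; ext u; simp [AddCommGrpCat.ofHom]
  map_comp f g := by
    apply Quiver.Hom.unop_inj; ext u; simp [AddCommGrpCat.ofHom]

lemma homOp_additive (M : C) : (homOp M).Additive where
  map_add := by
    intro X Y f g
    apply Quiver.Hom.unop_inj
    ext u
    show (f + g) ≫ u = f ≫ u + g ≫ u
    simp [Preadditive.add_comp]

lemma comp_app' {X Y Z : AddCommGrpCat.{u}} (f : X ⟶ Y) (g : Y ⟶ Z) (x : X) :
    (f ≫ g) x = g (f x) := rfl

lemma unop_comp_apply {X Y Z : AddCommGrpCat.{u}ᵒᵖ} (f : X ⟶ Y) (g : Y ⟶ Z) (x : Z.unop) :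
    (f ≫ g).unop x = f.unop (g.unop x) := rfl

/-- `Hom(X,-)` sends a kernel fork which is a limit to a kernel fork in `Ab`. -/
noncomputable def coyonKernel (X : C) {A B Z : C} (f : A ⟶ B) (g : B ⟶ Z) {w : f ≫ g = 0}
    (h : IsLimit (KernelFork.ofι f w))
    (w' : (coyon X).map f ≫ (coyon X).map g = 0) :
    IsLimit (KernelFork.ofι ((coyon X).map f) w') := by
  have hm : Mono f := mono_of_isLimit_fork h
  have hf : ∀ {T : C} (a b : T ⟶ A), a ≫ f = b ≫ f → a = b := by
    intro T a b hab; rwa [cancel_mono f] at hab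
  have hc : ∀ {W' : AddCommGrpCat.{u}} (t : W' ⟶ (coyon X).obj B),
      t ≫ (coyon X).map g = 0 → ∀ x : W', (t x) ≫ g = 0 := by
    intro W' t ht x
    have := congrArg (fun q : W' ⟶ (coyon X).obj Z => q x) ht
    simpa [comp_app'] using this
  have key : ∀ {W' : AddCommGrpCat.{u}} (t : W' ⟶ (coyon X).obj B)
      (ht : t ≫ (coyon X).map g = 0) (x : W'),
      { l : X ⟶ A // l ≫ f = t x } := by
    intro W' t ht x
    obtain ⟨l, hl⟩ := KernelFork.IsLimit.lift' h (t x) (hc t ht x)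
    exact ⟨l, by simpa using hl⟩
  refine KernelFork.IsLimit.ofι _ _
    (fun {W'} t ht => AddCommGrpCat.ofHom (AddMonoidHom.mk'
      (fun x => (key t ht x).1) ?_)) ?_ ?_
  · intro a b
    apply hf
    rw [Preadditive.add_comp, (key t ht (a+b)).2, (key t ht a).2, (key t ht b).2, map_add]
  · intro W' t ht
    ext x
    exact (key t ht x).2
  · intro W' t ht m hm'
    ext x
    apply hf
    show m x ≫ f = (key t ht x).1 ≫ f
    rw [(key t ht x).2]
    have := congrArg (fun q : W' ⟶ (coyon X).obj B => q x) hm'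
    simpa [comp_app'] using this

/-- `Hom(-,M)` sends a cokernel cofork which is a colimit to a cokernel cofork in `Abᵒᵖ`. -/
noncomputable def homOpCokernel (M : C) {A B Z : C} (f : A ⟶ B) (g : B ⟶ Z) {w : f ≫ g = 0}
    (h : IsColimit (CokernelCofork.ofπ g w))
    (w' : (homOp M).map f ≫ (homOp M).map g = 0) :
    IsColimit (CokernelCofork.ofπ ((homOp M).map g) w') := by
  have he : Epi g := epi_of_isColimit_cofork h
  have hg : ∀ {T : C} (a b : Z ⟶ T), g ≫ a = g ≫ b → a = b := by
    intro T a b hab; rwa [cancel_epi g] at hab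
  have hc : ∀ {Z' : AddCommGrpCat.{u}ᵒᵖ} (t : (homOp M).obj B ⟶ Z'),
      (homOp M).map f ≫ t = 0 → ∀ x : Z'.unop, f ≫ (t.unop x) = 0 := by
    intro Z' t ht x
    have := congrArg (fun q : (homOp M).obj A ⟶ Z' => q.unop x) ht
    simpa [unop_comp_apply] using this
  have key : ∀ {Z' : AddCommGrpCat.{u}ᵒᵖ} (t : (homOp M).obj B ⟶ Z')
      (ht : (homOp M).map f ≫ t = 0) (x : Z'.unop),
      { l : Z ⟶ M // g ≫ l = t.unop x } := by
    intro Z' t ht x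
    obtain ⟨l, hl⟩ := CokernelCofork.IsColimit.desc' h (t.unop x) (hc t ht x)
    exact ⟨l, by simpa using hl⟩
  refine CokernelCofork.IsColimit.ofπ _ _
    (fun {Z'} t ht => (AddCommGrpCat.ofHom (AddMonoidHom.mk'
      (fun x => (key t ht x).1) ?_)).op) ?_ ?_
  · intro a b
    apply hg
    rw [Preadditive.comp_add, (key t ht (a+b)).2, (key t ht a).2, (key t ht b).2, map_add]
  · intro Z' t ht
    apply Quiver.Hom.unop_inj
    ext x
    exact (key t ht x).2
  · intro Z' t ht m hm'
    apply Quiver.Hom.unop_inj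
    ext x
    apply hg
    show g ≫ m.unop x = g ≫ (key t ht x).1
    rw [(key t ht x).2]
    have := congrArg (fun q : (homOp M).obj B ⟶ Z' => q.unop x) hm'
    simpa [unop_comp_apply] using this

end Aux18
section Aux18b

lemma coyon_isLeftExactAb {A : Type*} [Category.{u} A] [Abelian A] (X : A) :
    IsLeftExactAb (coyon X) :=
  ⟨coyon_additive X, fun _ _ _ f g h =>
    ⟨coyonKernel X f g h.isKernel.some _⟩⟩

lemma homOp_isRightExactAb {A : Type*} [Category.{u} A] [Abelian A] (M : A) :
    IsRightExactAb (homOp M) :=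
  ⟨homOp_additive M, fun _ _ _ f g h =>
    ⟨homOpCokernel M f g h.isCokernel.some _⟩⟩

lemma comp_coyon_isLeftExactAb {A : Type*} [Category.{u} A] [Abelian A]
    {B : Type*} [Category.{u} B] [Abelian B] {G : A ⥤ B} (hG : IsLeftExactAb G) (X : B) :
    IsLeftExactAb (G ⋙ coyon X) :=
  ⟨by haveI := hG.additive; haveI := coyon_additive X; infer_instance, fun _ _ _ f g h =>
    ⟨coyonKernel X (G.map f) (G.map g) (hG.preserves f g h).some _⟩⟩

lemma comp_homOp_isRightExactAb {A : Type*} [Category.{u} A] [Abelian A]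
    {B : Type*} [Category.{u} B] [Abelian B] {F : A ⥤ B} (hF : IsRightExactAb F) (N : B) :
    IsRightExactAb (F ⋙ homOp N) :=
  ⟨by haveI := hF.additive; haveI := homOp_additive N; infer_instance, fun _ _ _ f g h =>
    ⟨homOpCokernel N (F.map f) (F.map g) (hF.preserves f g h).some _⟩⟩

variable {E : Type u} [SmallCategory E] [Preadditive E]

lemma coyon_isLeftExact (S : ExactStructure E) (X : E) :
    IsLeftExact S (coyon X) :=
  ⟨coyon_additive X, fun _ _ _ f g hc =>
    ⟨coyonKernel X f g (S.conf_pair f g hc).isKernel.some _⟩⟩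

lemma homOp_isRightExact (S : ExactStructure E) (M : E) :
    IsRightExact S (homOp M) :=
  ⟨homOp_additive M, fun _ _ _ f g hc =>
    ⟨homOpCokernel M f g (S.conf_pair f g hc).isCokernel.some _⟩⟩

end Aux18b
section Aux18c

variable {C : Type*} [Category.{u} C] [Preadditive C]

lemma coyon_map_apply (X : C) {Y Z : C} (f : Y ⟶ Z) (u : (coyon X).obj Y) :
    ((coyon X).map f) u = (u : X ⟶ Y) ≫ f := rfl

lemma homOp_map_unop_apply (M : C) {X Y : C} (f : X ⟶ Y) (u : ((homOp M).obj Y).unop) :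
    ((homOp M).map f).unop u = f ≫ (u : Y ⟶ M) := rfl

lemma nat_app {P Q : C ⥤ AddCommGrpCat.{u}} (σ : P ⟶ Q) {X Y : C} (f : X ⟶ Y) (x : P.obj X) :
    σ.app Y (P.map f x) = Q.map f (σ.app X x) :=
  congrArg (fun q : P.obj X ⟶ Q.obj Y => q x) (σ.naturality f)

lemma nat_app_op {P Q : C ⥤ AddCommGrpCat.{u}ᵒᵖ} (σ : P ⟶ Q) {X Y : C} (f : X ⟶ Y)
    (y : (Q.obj Y).unop) :
    (P.map f).unop ((σ.app Y).unop y) = (σ.app X).unop ((Q.map f).unop y) :=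
  congrArg (fun q : P.obj X ⟶ Q.obj Y => q.unop y) (σ.naturality f)

lemma iso_hom_inv_apply {P Q : C ⥤ AddCommGrpCat.{u}} (ρ : P ≅ Q) (X : C) (y : Q.obj X) :
    ρ.hom.app X (ρ.inv.app X y) = y :=
  congrArg (fun q : Q.obj X ⟶ Q.obj X => q y) (ρ.inv_hom_id_app X)

lemma iso_inv_hom_unop_apply {P Q : C ⥤ AddCommGrpCat.{u}ᵒᵖ} (ρ : P ≅ Q) (X : C)
    (y : (Q.obj X).unop) :
    (ρ.inv.app X).unop ((ρ.hom.app X).unop y) = y :=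
  congrArg (fun q : Q.obj X ⟶ Q.obj X => q.unop y) (ρ.inv_hom_id_app X)

end Aux18c

section Aux18d

variable {E : Type u} [SmallCategory E] [Preadditive E] {S : ExactStructure E}
variable {Ar : Type (u + 1)} [Category.{u} Ar] [Abelian Ar] {iR : E ⥤ Ar}
variable {Al : Type (u + 1)} [Category.{u} Al] [Abelian Al] {iL : E ⥤ Al}

/-- The universal functor of a left abelian envelope is fully faithful. -/
lemma iL_ff (hL : IsLeftAbelianEnvelope.{u, u, u + 1, u, u + 1, u} S iL) (V W : E) :
    Function.Bijective (fun t : V ⟶ W => iL.map t) := by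
  haveI := hL.leftExact.additive
  obtain ⟨L, hLex, ⟨ρ⟩⟩ := hL.essSurj AddCommGrpCat.{u} (coyon V) (coyon_isLeftExact S V)
  haveI := hLex.additive
  set x : L.obj (iL.obj V) := ρ.inv.app V (𝟙 V) with hx
  have hkey : ∀ (t : V ⟶ W), ρ.hom.app W (((iL ⋙ L).map t) x) = t := by
    intro t
    have h1 := nat_app ρ.hom (P := iL ⋙ L) (Q := coyon V) t x
    have h2 : ρ.hom.app V x = 𝟙 V := iso_hom_inv_apply ρ V (𝟙 V)
    rw [h2, coyon_map_apply, Category.id_comp] at h1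
    exact h1
  constructor
  · intro t t' htt
    have h := hkey t
    rw [show (iL ⋙ L).map t = (iL ⋙ L).map t' from congrArg L.map htt, hkey t'] at h
    exact h.symm
  · intro δ
    have hadd : ∀ (W' : E) (a b : V ⟶ W'), iL.map (a + b) = iL.map a + iL.map b := by
      intro W' a b; exact iL.map_add
    let τ : (iL ⋙ L) ⟶ (iL ⋙ coyon (iL.obj V)) :=
      { app := fun W' => ρ.hom.app W' ≫ AddCommGrpCat.ofHom
          (AddMonoidHom.mk' (fun u : V ⟶ W' => iL.map u) (hadd W'))
        naturality := by
          intro W' W'' e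
          ext y
          show iL.map (ρ.hom.app W'' (((iL ⋙ L).map e) y))
            = iL.map (ρ.hom.app W' y) ≫ iL.map e
          have h1 := nat_app ρ.hom (P := iL ⋙ L) (Q := coyon V) e y
          rw [h1, coyon_map_apply, iL.map_comp] }
    obtain ⟨Θ, hΘ⟩ := (hL.whisker_bijective AddCommGrpCat.{u} L (coyon (iL.obj V)) hLex
      (coyon_isLeftExactAb (iL.obj V))).2 τ
    refine ⟨ρ.hom.app W ((L.map δ) x), ?_⟩
    have happ : ∀ (W' : E) (y : L.obj (iL.obj W')),
        Θ.app (iL.obj W') y = iL.map (ρ.hom.app W' y) :=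
      fun W' y =>
        congrArg (fun q : (iL ⋙ L) ⟶ (iL ⋙ coyon (iL.obj V)) => q.app W' y) hΘ
    have h1 := nat_app Θ (P := L) (Q := coyon (iL.obj V)) δ x
    rw [happ W (L.map δ x)] at h1
    have h2 : Θ.app (iL.obj V) x = 𝟙 (iL.obj V) := by
      rw [happ V x]
      rw [show ρ.hom.app V x = 𝟙 V from iso_hom_inv_apply ρ V (𝟙 V), iL.map_id]
    rw [h2, coyon_map_apply, Category.id_comp] at h1
    exact h1

/-- The universal functor of a right abelian envelope is fully faithful. -/
lemma iR_ff (hR : IsRightAbelianEnvelope.{u, u, u + 1, u, u + 1, u} S iR) (V A : E) :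
    Function.Bijective (fun t : V ⟶ A => iR.map t) := by
  haveI := hR.rightExact.additive
  obtain ⟨R, hRex, ⟨ρ⟩⟩ := hR.essSurj AddCommGrpCat.{u}ᵒᵖ (homOp A) (homOp_isRightExact S A)
  haveI := hRex.additive
  set x : (R.obj (iR.obj A)).unop := (ρ.hom.app A).unop (𝟙 A) with hx
  have hkey : ∀ (t : V ⟶ A),
      (ρ.inv.app V).unop (((iR ⋙ R).map t).unop x) = t := by
    intro t
    have h1 := nat_app_op ρ.hom (P := iR ⋙ R) (Q := homOp A) t (𝟙 A)
    rw [homOp_map_unop_apply, Category.comp_id] at h1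
    rw [← hx] at h1
    rw [h1, iso_inv_hom_unop_apply]
  constructor
  · intro t t' htt
    have h := hkey t
    rw [show (iR ⋙ R).map t = (iR ⋙ R).map t' from congrArg R.map htt, hkey t'] at h
    exact h.symm
  · intro δ
    have hadd : ∀ (V' : E) (a b : V' ⟶ A), iR.map (a + b) = iR.map a + iR.map b := by
      intro V' a b; exact iR.map_add
    let τ : (iR ⋙ homOp (iR.obj A)) ⟶ (iR ⋙ R) :=
      { app := fun V' => ((ρ.inv.app V').unop ≫ AddCommGrpCat.ofHom
          (AddMonoidHom.mk' (fun u : V' ⟶ A => iR.map u) (hadd V'))).op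
        naturality := by
          intro V' V'' e
          apply Quiver.Hom.unop_inj
          ext y
          show iR.map e ≫ iR.map ((ρ.inv.app V'').unop y)
            = iR.map ((ρ.inv.app V').unop (((iR ⋙ R).map e).unop y))
          have h1 := nat_app_op ρ.inv (P := homOp A) (Q := iR ⋙ R) e y
          rw [homOp_map_unop_apply] at h1
          rw [← h1, iR.map_comp] }
    obtain ⟨Θ, hΘ⟩ := (hR.whisker_bijective AddCommGrpCat.{u}ᵒᵖ (homOp (iR.obj A)) R
      (homOp_isRightExactAb (iR.obj A)) hRex).2 τ
    refine ⟨(ρ.inv.app V).unop ((R.map δ).unop x), ?_⟩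
    have happ : ∀ (V' : E) (y : (R.obj (iR.obj V')).unop),
        (Θ.app (iR.obj V')).unop y = iR.map ((ρ.inv.app V').unop y) :=
      fun V' y =>
        congrArg (fun q : (iR ⋙ homOp (iR.obj A)) ⟶ (iR ⋙ R) => (q.app V').unop y) hΘ
    have h1 := nat_app_op Θ (P := homOp (iR.obj A)) (Q := R) δ x
    rw [happ A x] at h1
    have h2 : (ρ.inv.app A).unop x = 𝟙 A := by
      rw [hx, iso_inv_hom_unop_apply]
    rw [h2, iR.map_id, homOp_map_unop_apply, Category.comp_id,
      happ V ((R.map δ).unop x)] at h1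
    exact h1.symm

end Aux18d
section Aux18e

variable {E : Type u} [SmallCategory E] [Preadditive E] {S : ExactStructure E}
variable {Ar : Type (u + 1)} [Category.{u} Ar] [Abelian Ar] {iR : E ⥤ Ar}
variable {Al : Type (u + 1)} [Category.{u} Al] [Abelian Al] {iL : E ⥤ Al}

lemma unop_zero' {X Y : AddCommGrpCat.{u}ᵒᵖ} : (0 : X ⟶ Y).unop = 0 := rfl

/-- The universal functor of a right abelian envelope is also left exact. -/
lemma iR_leftExact (hR : IsRightAbelianEnvelope.{u, u, u + 1, u, u + 1, u} S iR) :
    IsLeftExact S iR := by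
  haveI := hR.rightExact.additive
  refine ⟨hR.rightExact.additive, ?_⟩
  intro A X Cc f g hc
  have hfE : Mono f := mono_of_isLimit_fork (S.conf_pair f g hc).isKernel.some
  have hxi : ∀ (V : E) (ξ : iR.obj V ⟶ iR.obj A), ξ ≫ iR.map f = 0 → ξ = 0 := by
    intro V ξ hξ
    obtain ⟨t, ht0⟩ := (iR_ff (S := S) hR V A).2 ξ
    have ht : iR.map t = ξ := ht0
    have h0 : iR.map (t ≫ f) = iR.map (0 : V ⟶ X) := by
      rw [iR.map_comp, ht, hξ, iR.map_zero]
    have h2 : t ≫ f = 0 := (iR_ff (S := S) hR V X).1 h0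
    have h3 : t = 0 := by
      have := (cancel_mono f).1 (by rw [h2, zero_comp] : t ≫ f = 0 ≫ f)
      exact this
    rw [← ht, h3, iR.map_zero]
  have hmono : Mono (iR.map f) := by
    rw [Preadditive.mono_iff_cancel_zero]
    intro T δ' hδ'
    let κ : homOp (iR.obj A) ⟶ homOp T :=
      { app := fun M' => (AddCommGrpCat.ofHom (AddMonoidHom.mk'
          (fun d : M' ⟶ T => d ≫ δ')
          (by intro a b; simp [Preadditive.add_comp]))).op
        naturality := by
          intro M' M'' m
          apply Quiver.Hom.unop_inj
          ext d
          show m ≫ (d ≫ δ') = (m ≫ d) ≫ δ'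
          simp }
    have hw : Functor.whiskerLeft iR κ = Functor.whiskerLeft iR (0 : homOp (iR.obj A) ⟶ homOp T) := by
      ext V
      apply Quiver.Hom.unop_inj
      ext d
      show d ≫ δ' = ((Functor.whiskerLeft iR (0 : homOp (iR.obj A) ⟶ homOp T)).app V).unop d
      have hz : ((Functor.whiskerLeft iR (0 : homOp (iR.obj A) ⟶ homOp T)).app V).unop d = 0 := rfl
      rw [hz]
      exact hxi V (d ≫ δ') (by rw [Category.assoc, hδ', Limits.comp_zero])
    have hκ : κ = 0 :=
      (hR.whisker_bijective AddCommGrpCat.{u}ᵒᵖ (homOp (iR.obj A)) (homOp T)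
        (homOp_isRightExactAb _) (homOp_isRightExactAb _)).1 hw
    have := congrArg (fun q : homOp (iR.obj A) ⟶ homOp T => (q.app T).unop (𝟙 T)) hκ
    simpa [NatTrans.app_zero, unop_zero', κ] using this
  exact ⟨Abelian.monoIsKernelOfCokernel _ (hR.rightExact.preserves f g hc).some⟩

/-- The universal functor of a left abelian envelope is also right exact. -/
lemma iL_rightExact (hL : IsLeftAbelianEnvelope.{u, u, u + 1, u, u + 1, u} S iL) :
    IsRightExact S iL := by
  haveI := hL.leftExact.additive
  refine ⟨hL.leftExact.additive, ?_⟩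
  intro A X Cc f g hc
  have hgE : Epi g := epi_of_isColimit_cofork (S.conf_pair f g hc).isCokernel.some
  have hxi : ∀ (V : E) (ξ : iL.obj Cc ⟶ iL.obj V), iL.map g ≫ ξ = 0 → ξ = 0 := by
    intro V ξ hξ
    obtain ⟨t, ht0⟩ := (iL_ff (S := S) hL Cc V).2 ξ
    have ht : iL.map t = ξ := ht0
    have h0 : iL.map (g ≫ t) = iL.map (0 : X ⟶ V) := by
      rw [iL.map_comp, ht, hξ, iL.map_zero]
    have h2 : g ≫ t = 0 := (iL_ff (S := S) hL X V).1 h0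
    have h3 : t = 0 := (cancel_epi g).1 (by rw [h2, Limits.comp_zero])
    rw [← ht, h3, iL.map_zero]
  have hepi : Epi (iL.map g) := by
    rw [Preadditive.epi_iff_cancel_zero]
    intro T δ' hδ'
    let κ : coyon T ⟶ coyon (iL.obj Cc) :=
      { app := fun N => AddCommGrpCat.ofHom (AddMonoidHom.mk'
          (fun u : T ⟶ N => δ' ≫ u)
          (by intro a b; simp [Preadditive.comp_add]))
        naturality := by
          intro N N' n
          ext u
          show δ' ≫ (u ≫ n) = (δ' ≫ u) ≫ n
          simp }
    have hw : Functor.whiskerLeft iL κ = Functor.whiskerLeft iL (0 : coyon T ⟶ coyon (iL.obj Cc)) := by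
      ext V u
      show δ' ≫ u = ((Functor.whiskerLeft iL (0 : coyon T ⟶ coyon (iL.obj Cc))).app V) u
      have hz : ((Functor.whiskerLeft iL (0 : coyon T ⟶ coyon (iL.obj Cc))).app V) u = 0 := rfl
      rw [hz]
      exact hxi V (δ' ≫ u) (by rw [← Category.assoc, hδ', Limits.zero_comp])
    have hκ : κ = 0 :=
      (hL.whisker_bijective AddCommGrpCat.{u} (coyon T) (coyon (iL.obj Cc))
        (coyon_isLeftExactAb _) (coyon_isLeftExactAb _)).1 hw
    have := congrArg (fun q : coyon T ⟶ coyon (iL.obj Cc) => (q.app T) (𝟙 T)) hκ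
    simpa [NatTrans.app_zero, κ] using this
  exact ⟨Abelian.epiIsCokernelOfKernel _ (hL.leftExact.preserves f g hc).some⟩

end Aux18e
section Aux18f

variable {C : Type*} [Category.{u} C] [Preadditive C]

/-- Postcomposition transformation between contravariant hom functors. -/
@[simps]
def homOpMap {M M' : C} (k : M ⟶ M') : homOp M' ⟶ homOp M where
  app X := (AddCommGrpCat.ofHom (AddMonoidHom.mk' (fun u : X ⟶ M => u ≫ k)
    (by intro a b; simp [Preadditive.add_comp]))).op
  naturality := by
    intro X Y m
    apply Quiver.Hom.unop_inj
    ext u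
    show m ≫ (u ≫ k) = (m ≫ u) ≫ k
    simp

/-- Precomposition transformation between covariant hom functors. -/
@[simps]
def coyonMap {X X' : C} (k : X' ⟶ X) : coyon X ⟶ coyon X' where
  app N := AddCommGrpCat.ofHom (AddMonoidHom.mk' (fun u : X ⟶ N => k ≫ u)
    (by intro a b; simp [Preadditive.comp_add]))
  naturality := by
    intro N N' n
    ext u
    show k ≫ (u ≫ n) = (k ≫ u) ≫ n
    simp

end Aux18f

section Aux18g

variable {E : Type u} [SmallCategory E] [Preadditive E] {S : ExactStructure E}
variable {Ar : Type (u + 1)} [Category.{u} Ar] [Abelian Ar] {iR : E ⥤ Ar}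
variable {Al : Type (u + 1)} [Category.{u} Al] [Abelian Al] {iL : E ⥤ Al}

lemma adj_exists (hR : IsRightAbelianEnvelope.{u, u, u + 1, u, u + 1, u} S iR)
    (hL : IsLeftAbelianEnvelope.{u, u, u + 1, u, u + 1, u} S iL)
    {F : Ar ⥤ Al} {G : Al ⥤ Ar}
    (hF : IsRightExactAb F) (hG : IsLeftExactAb G)
    (α : iR ⋙ F ≅ iL) (β : iL ⋙ G ≅ iR) :
    Nonempty (F ⊣ G) := by
  haveI := hL.leftExact.additive
  haveI := hR.rightExact.additive
  haveI := hF.additive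
  haveI := hG.additive
  -- fully faithfulness data
  let eL : ∀ {V W : E}, (iL.obj V ⟶ iL.obj W) → (V ⟶ W) :=
    fun {V W} δ => (Equiv.ofBijective _ (iL_ff (S := S) hL V W)).symm δ
  let eR : ∀ {V W : E}, (iR.obj V ⟶ iR.obj W) → (V ⟶ W) :=
    fun {V W} δ => (Equiv.ofBijective _ (iR_ff (S := S) hR V W)).symm δ
  have eL_sect : ∀ {V W : E} (δ : iL.obj V ⟶ iL.obj W), iL.map (eL δ) = δ :=
    fun {V W} δ => (Equiv.ofBijective _ (iL_ff (S := S) hL V W)).apply_symm_apply δ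
  have eR_sect : ∀ {V W : E} (δ : iR.obj V ⟶ iR.obj W), iR.map (eR δ) = δ :=
    fun {V W} δ => (Equiv.ofBijective _ (iR_ff (S := S) hR V W)).apply_symm_apply δ
  have eL_retr : ∀ {V W : E} (t : V ⟶ W), eL (iL.map t) = t :=
    fun {V W} t => (Equiv.ofBijective _ (iL_ff (S := S) hL V W)).symm_apply_apply t
  have eR_retr : ∀ {V W : E} (t : V ⟶ W), eR (iR.map t) = t :=
    fun {V W} t => (Equiv.ofBijective _ (iR_ff (S := S) hR V W)).symm_apply_apply t
  have eL_inj : ∀ {V W : E} (a b : iL.obj V ⟶ iL.obj W), iL.map (eL a) = iL.map (eL b) → a = b := by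
    intro V W a b hab
    rw [eL_sect, eL_sect] at hab; exact hab
  have eL_add : ∀ {V W : E} (a b : iL.obj V ⟶ iL.obj W), eL (a + b) = eL a + eL b := by
    intro V W a b
    have : iL.map (eL (a + b)) = iL.map (eL a + eL b) := by
      rw [eL_sect, iL.map_add, eL_sect, eL_sect]
    exact (iL_ff (S := S) hL V W).1 this
  have eR_add : ∀ {V W : E} (a b : iR.obj V ⟶ iR.obj W), eR (a + b) = eR a + eR b := by
    intro V W a b
    have : iR.map (eR (a + b)) = iR.map (eR a + eR b) := by
      rw [eR_sect, iR.map_add, eR_sect, eR_sect]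
    exact (iR_ff (S := S) hR V W).1 this
  have eL_comp_left : ∀ {V V' W : E} (e : V ⟶ V') (δ : iL.obj V' ⟶ iL.obj W),
      eL (iL.map e ≫ δ) = e ≫ eL δ := by
    intro V V' W e δ
    apply (iL_ff (S := S) hL V W).1
    show iL.map (eL (iL.map e ≫ δ)) = iL.map (e ≫ eL δ)
    rw [eL_sect, iL.map_comp, eL_sect]
  have eL_comp_right : ∀ {V W W' : E} (δ : iL.obj V ⟶ iL.obj W) (w : W ⟶ W'),
      eL (δ ≫ iL.map w) = eL δ ≫ w := by
    intro V W W' δ w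
    apply (iL_ff (S := S) hL V W').1
    show iL.map (eL (δ ≫ iL.map w)) = iL.map (eL δ ≫ w)
    rw [eL_sect, iL.map_comp, eL_sect]
  have eR_comp_left : ∀ {V V' W : E} (e : V ⟶ V') (δ : iR.obj V' ⟶ iR.obj W),
      eR (iR.map e ≫ δ) = e ≫ eR δ := by
    intro V V' W e δ
    apply (iR_ff (S := S) hR V W).1
    show iR.map (eR (iR.map e ≫ δ)) = iR.map (e ≫ eR δ)
    rw [eR_sect, iR.map_comp, eR_sect]
  have eR_comp_right : ∀ {V W W' : E} (δ : iR.obj V ⟶ iR.obj W) (w : W ⟶ W'),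
      eR (δ ≫ iR.map w) = eR δ ≫ w := by
    intro V W W' δ w
    apply (iR_ff (S := S) hR V W').1
    show iR.map (eR (δ ≫ iR.map w)) = iR.map (eR δ ≫ w)
    rw [eR_sect, iR.map_comp, eR_sect]
  -- layer 1 : restricted transformations
  let lam0 : ∀ W : E, (iR ⋙ homOp (G.obj (iL.obj W))) ⟶ (iR ⋙ (F ⋙ homOp (iL.obj W))) :=
    fun W =>
    { app := fun V => (AddCommGrpCat.ofHom (AddMonoidHom.mk'
        (fun φ : F.obj (iR.obj V) ⟶ iL.obj W =>
          iR.map (eL (α.inv.app V ≫ φ)) ≫ β.inv.app W)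
        (by
          intro a b
          show iR.map (eL (α.inv.app V ≫ (a + b))) ≫ β.inv.app W
            = iR.map (eL (α.inv.app V ≫ a)) ≫ β.inv.app W
              + iR.map (eL (α.inv.app V ≫ b)) ≫ β.inv.app W
          rw [Preadditive.comp_add, eL_add, iR.map_add, Preadditive.add_comp]))).op
      naturality := by
        intro V V' e
        apply Quiver.Hom.unop_inj
        ext φ
        show iR.map e ≫ iR.map (eL (α.inv.app V' ≫ φ)) ≫ β.inv.app W
          = iR.map (eL (α.inv.app V ≫ F.map (iR.map e) ≫ φ)) ≫ β.inv.app W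
        have h' : iL.map e ≫ α.inv.app V' = α.inv.app V ≫ F.map (iR.map e) :=
          α.inv.naturality e
        have hα : α.inv.app V ≫ F.map (iR.map e) ≫ φ = iL.map e ≫ α.inv.app V' ≫ φ := by
          rw [← Category.assoc, ← h', Category.assoc]
        rw [hα, eL_comp_left, iR.map_comp, Category.assoc] }
  let lam0' : ∀ W : E, (iR ⋙ (F ⋙ homOp (iL.obj W))) ⟶ (iR ⋙ homOp (G.obj (iL.obj W))) :=
    fun W =>
    { app := fun V => (AddCommGrpCat.ofHom (AddMonoidHom.mk'
        (fun ψ : iR.obj V ⟶ G.obj (iL.obj W) =>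
          α.hom.app V ≫ iL.map (eR (ψ ≫ β.hom.app W)))
        (by
          intro a b
          show α.hom.app V ≫ iL.map (eR ((a + b) ≫ β.hom.app W))
            = α.hom.app V ≫ iL.map (eR (a ≫ β.hom.app W))
              + α.hom.app V ≫ iL.map (eR (b ≫ β.hom.app W))
          rw [Preadditive.add_comp, eR_add, iL.map_add, Preadditive.comp_add]))).op
      naturality := by
        intro V V' e
        apply Quiver.Hom.unop_inj
        ext ψ
        show F.map (iR.map e) ≫ α.hom.app V' ≫ iL.map (eR (ψ ≫ β.hom.app W))
          = α.hom.app V ≫ iL.map (eR ((iR.map e ≫ ψ) ≫ β.hom.app W))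
        have hα : F.map (iR.map e) ≫ α.hom.app V' = α.hom.app V ≫ iL.map e :=
          α.hom.naturality e
        rw [Category.assoc, eR_comp_left, iL.map_comp, ← Category.assoc, hα,
          Category.assoc] }
  -- lifts along iR
  have hLam : ∀ W : E, ∃ (ΛW : homOp (G.obj (iL.obj W)) ⟶ F ⋙ homOp (iL.obj W)),
      Functor.whiskerLeft iR ΛW = lam0 W := fun W =>
    (hR.whisker_bijective AddCommGrpCat.{u}ᵒᵖ _ _
      (homOp_isRightExactAb _) (comp_homOp_isRightExactAb hF _)).2 (lam0 W)
  choose Lam hLamW using hLam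
  have hLam' : ∀ W : E, ∃ (ΛW : F ⋙ homOp (iL.obj W) ⟶ homOp (G.obj (iL.obj W))),
      Functor.whiskerLeft iR ΛW = lam0' W := fun W =>
    (hR.whisker_bijective AddCommGrpCat.{u}ᵒᵖ _ _
      (comp_homOp_isRightExactAb hF _) (homOp_isRightExactAb _)).2 (lam0' W)
  choose Lam' hLamW' using hLam'
  -- the two composites are the identity
  have hE1 : ∀ W : E, Lam W ≫ Lam' W = 𝟙 (homOp (G.obj (iL.obj W))) := by
    intro W
    apply (hR.whisker_bijective AddCommGrpCat.{u}ᵒᵖ _ _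
      (homOp_isRightExactAb _) (homOp_isRightExactAb _)).1
    beta_reduce
    rw [Functor.whiskerLeft_comp, hLamW, hLamW', Functor.whiskerLeft_id']
    ext V
    apply Quiver.Hom.unop_inj
    ext ψ
    show iR.map (eL (α.inv.app V ≫ (α.hom.app V ≫ iL.map (eR (ψ ≫ β.hom.app W)))))
        ≫ β.inv.app W = ψ
    rw [Iso.inv_hom_id_app_assoc, eL_retr, eR_sect, Category.assoc, Iso.hom_inv_id_app]
    exact Category.comp_id ψ
  have hE2 : ∀ W : E, Lam' W ≫ Lam W = 𝟙 (F ⋙ homOp (iL.obj W)) := by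
    intro W
    apply (hR.whisker_bijective AddCommGrpCat.{u}ᵒᵖ _ _
      (comp_homOp_isRightExactAb hF _) (comp_homOp_isRightExactAb hF _)).1
    beta_reduce
    rw [Functor.whiskerLeft_comp, hLamW, hLamW', Functor.whiskerLeft_id']
    ext V
    apply Quiver.Hom.unop_inj
    ext φ
    show α.hom.app V ≫ iL.map (eR ((iR.map (eL (α.inv.app V ≫ φ)) ≫ β.inv.app W)
        ≫ β.hom.app W)) = φ
    rw [Category.assoc, Iso.inv_hom_id_app, Category.comp_id, eR_retr, eL_sect,
      Iso.hom_inv_id_app_assoc]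
  -- naturality of `Lam` in `W`
  have hE3 : ∀ {W W' : E} (w : W ⟶ W'),
      homOpMap (G.map (iL.map w)) ≫ Lam W = Lam W' ≫ Functor.whiskerLeft F (homOpMap (iL.map w)) := by
    intro W W' w
    apply (hR.whisker_bijective AddCommGrpCat.{u}ᵒᵖ _ _
      (homOp_isRightExactAb _) (comp_homOp_isRightExactAb hF _)).1
    beta_reduce
    rw [Functor.whiskerLeft_comp, Functor.whiskerLeft_comp, hLamW, hLamW]
    ext V
    apply Quiver.Hom.unop_inj
    ext φ
    show (iR.map (eL (α.inv.app V ≫ φ)) ≫ β.inv.app W) ≫ G.map (iL.map w)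
      = iR.map (eL (α.inv.app V ≫ (φ ≫ iL.map w))) ≫ β.inv.app W'
    have hβ : β.inv.app W ≫ G.map (iL.map w) = iR.map w ≫ β.inv.app W' :=
      (β.inv.naturality w).symm
    rw [Category.assoc, hβ, ← Category.assoc, ← iR.map_comp, ← eL_comp_right,
      Category.assoc]
  -- naturality of `Lam'` in `W`
  have hE4 : ∀ {W W' : E} (w : W ⟶ W'),
      Functor.whiskerLeft F (homOpMap (iL.map w)) ≫ Lam' W = Lam' W' ≫ homOpMap (G.map (iL.map w)) := by
    intro W W' w
    apply (hR.whisker_bijective AddCommGrpCat.{u}ᵒᵖ _ _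
      (comp_homOp_isRightExactAb hF _) (homOp_isRightExactAb _)).1
    beta_reduce
    rw [Functor.whiskerLeft_comp, Functor.whiskerLeft_comp, hLamW', hLamW']
    ext V
    apply Quiver.Hom.unop_inj
    ext ψ
    show (α.hom.app V ≫ iL.map (eR (ψ ≫ β.hom.app W))) ≫ iL.map w
      = α.hom.app V ≫ iL.map (eR ((ψ ≫ G.map (iL.map w)) ≫ β.hom.app W'))
    have hβ : G.map (iL.map w) ≫ β.hom.app W' = β.hom.app W ≫ iR.map w :=
      β.hom.naturality w
    have hr : (ψ ≫ G.map (iL.map w)) ≫ β.hom.app W' = (ψ ≫ β.hom.app W) ≫ iR.map w := by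
      rw [Category.assoc, hβ, ← Category.assoc]
    rw [hr, eR_comp_right, iL.map_comp, Category.assoc]
  -- layer 2 : lifts along iL
  let xi0 : ∀ M : Ar, (iL ⋙ coyon (F.obj M)) ⟶ (iL ⋙ (G ⋙ coyon M)) := fun M =>
    { app := fun W => ((Lam W).app M).unop
      naturality := by
        intro W W' w
        ext φ
        have h3 := congrArg (fun q => (q.app M).unop φ) (hE3 w)
        -- LHS of h3 : ((homOpMap (G.map (iL.map w)) ≫ Lam W).app M).unop φ
        -- RHS of h3 : ((Lam W' ≫ Functor.whiskerLeft F (homOpMap (iL.map w))).app M).unop φ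
        have hL3 : ((Lam W).app M).unop φ ≫ G.map (iL.map w)
            = ((Lam W').app M).unop (φ ≫ iL.map w) := by
          exact h3
        show ((Lam W').app M).unop (φ ≫ iL.map w)
          = ((Lam W).app M).unop φ ≫ G.map (iL.map w)
        exact hL3.symm }
  let xi0' : ∀ M : Ar, (iL ⋙ (G ⋙ coyon M)) ⟶ (iL ⋙ coyon (F.obj M)) := fun M =>
    { app := fun W => ((Lam' W).app M).unop
      naturality := by
        intro W W' w
        ext ψ
        have h4 := congrArg (fun q => (q.app M).unop ψ) (hE4 w)
        have hL4 : ((Lam' W).app M).unop ψ ≫ iL.map w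
            = ((Lam' W').app M).unop (ψ ≫ G.map (iL.map w)) := by
          exact h4
        show ((Lam' W').app M).unop (ψ ≫ G.map (iL.map w))
          = ((Lam' W).app M).unop ψ ≫ iL.map w
        exact hL4.symm }
  have hXi : ∀ M : Ar, ∃ (ΞM : coyon (F.obj M) ⟶ G ⋙ coyon M),
      Functor.whiskerLeft iL ΞM = xi0 M := fun M =>
    (hL.whisker_bijective AddCommGrpCat.{u} _ _
      (coyon_isLeftExactAb _) (comp_coyon_isLeftExactAb hG M)).2 (xi0 M)
  choose Xi hXiM using hXi
  have hXi' : ∀ M : Ar, ∃ (ΞM : G ⋙ coyon M ⟶ coyon (F.obj M)),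
      Functor.whiskerLeft iL ΞM = xi0' M := fun M =>
    (hL.whisker_bijective AddCommGrpCat.{u} _ _
      (comp_coyon_isLeftExactAb hG M) (coyon_isLeftExactAb _)).2 (xi0' M)
  choose Xi' hXiM' using hXi'
  -- the two composites are the identity
  have hE5 : ∀ M : Ar, Xi M ≫ Xi' M = 𝟙 (coyon (F.obj M)) := by
    intro M
    apply (hL.whisker_bijective AddCommGrpCat.{u} _ _
      (coyon_isLeftExactAb _) (coyon_isLeftExactAb _)).1
    beta_reduce
    rw [Functor.whiskerLeft_comp, hXiM, hXiM', Functor.whiskerLeft_id']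
    ext W φ
    show ((Lam' W).app M).unop (((Lam W).app M).unop φ) = φ
    have := congrArg (fun q => (q.app M).unop φ) (hE2 W)
    exact this
  have hE6 : ∀ M : Ar, Xi' M ≫ Xi M = 𝟙 (G ⋙ coyon M) := by
    intro M
    apply (hL.whisker_bijective AddCommGrpCat.{u} _ _
      (comp_coyon_isLeftExactAb hG M) (comp_coyon_isLeftExactAb hG M)).1
    beta_reduce
    rw [Functor.whiskerLeft_comp, hXiM, hXiM', Functor.whiskerLeft_id']
    ext W ψ
    show ((Lam W).app M).unop (((Lam' W).app M).unop ψ) = ψ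
    have := congrArg (fun q => (q.app M).unop ψ) (hE1 W)
    exact this
  -- naturality of `Xi'` in `M`
  have hE8 : ∀ {M' M : Ar} (m : M' ⟶ M),
      Functor.whiskerLeft G (coyonMap m) ≫ Xi' M' = Xi' M ≫ coyonMap (F.map m) := by
    intro M' M m
    apply (hL.whisker_bijective AddCommGrpCat.{u} _ _
      (comp_coyon_isLeftExactAb hG M) (coyon_isLeftExactAb _)).1
    beta_reduce
    rw [Functor.whiskerLeft_comp, Functor.whiskerLeft_comp, hXiM', hXiM']
    ext W ψ
    show ((Lam' W).app M').unop (m ≫ ψ) = F.map m ≫ ((Lam' W).app M).unop ψ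
    have := nat_app_op (Lam' W) m ψ
    -- this : ((F ⋙ homOp (iL.obj W)).map m).unop (((Lam' W).app M).unop ψ)
    --      = ((Lam' W).app M').unop ((homOp (G.obj (iL.obj W))).map m).unop ψ)
    exact this.symm
  -- assemble the adjunction
  refine ⟨Adjunction.mkOfHomEquiv
    { homEquiv := fun M N =>
        { toFun := fun φ => (Xi M).app N φ
          invFun := fun ψ => (Xi' M).app N ψ
          left_inv := ?_
          right_inv := ?_ }
      homEquiv_naturality_left_symm := ?_
      homEquiv_naturality_right := ?_ }⟩
  · intro φ
    have := congrArg (fun q : coyon (F.obj M) ⟶ coyon (F.obj M) => (q.app N) φ) (hE5 M)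
    exact this
  · intro ψ
    have := congrArg (fun q : G ⋙ coyon M ⟶ G ⋙ coyon M => (q.app N) ψ) (hE6 M)
    exact this
  · intro M' M N m ψ
    have := congrArg (fun q : G ⋙ coyon M ⟶ coyon (F.obj M') => (q.app N) ψ) (hE8 m)
    exact this
  · intro M N N' φ n
    have := nat_app (Xi M) n φ
    exact this

end Aux18g
/-- If the exact category `(E, S)` admits both a right abelian envelope `(A_r, i_R)` and a
left abelian envelope `(A_l, i_L)`, then there are a right exact functor `F : A_r ⥤ A_l`
with `i_R ⋙ F ≅ i_L` and a left exact functor `G : A_l ⥤ A_r` with `i_L ⋙ G ≅ i_R`, and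
`F` is left adjoint to `G`. -/
theorem statement_18 {E : Type u} [SmallCategory E] [Preadditive E] [HasFiniteBiproducts E]
    (S : ExactStructure E)
    {Ar : Type (u + 1)} [Category.{u} Ar] [Abelian Ar] (iR : E ⥤ Ar)
    {Al : Type (u + 1)} [Category.{u} Al] [Abelian Al] (iL : E ⥤ Al)
    (hR : IsRightAbelianEnvelope.{u, u, u + 1, u, u + 1, u} S iR)
    (hL : IsLeftAbelianEnvelope.{u, u, u + 1, u, u + 1, u} S iL) :
    ∃ (F : Ar ⥤ Al) (G : Al ⥤ Ar),
      IsRightExactAb F ∧ Nonempty (iR ⋙ F ≅ iL) ∧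
      IsLeftExactAb G ∧ Nonempty (iL ⋙ G ≅ iR) ∧
      Nonempty (F ⊣ G) := by
  obtain ⟨F, hF, ⟨α⟩⟩ := hR.essSurj Al iL (iL_rightExact hL)
  obtain ⟨G, hG, ⟨β⟩⟩ := hL.essSurj Ar iR (iR_leftExact hR)
  exact ⟨F, G, hF, ⟨α⟩, hG, ⟨β⟩, adj_exists hR hL hF hG α β⟩

end Env
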